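/- Let τ1, τ2, τ3, τ4 > 0 and α_min, β_min, γ_min > 0. For λ > 0 define α*_λ = max{(2τ1/λ)^{1/3}, α_min}, γ*_λ = max{(2τ4/λ)^{1/3}, γ_min}, β*_λ = max{β_λ, β_min} where β_λ is the unique zero of g_λ(β) = τ2·2^{τ3/β}·(1 − τ3·ln 2/β) − τ2 + λ on (0,∞), and z_λ = α*_λ + β*_λ + γ*_λ. Then α*_λ, β*_λ, γ*_λ, and hence z_λ, are monotonically non-increasing functions of λ on (0, ∞). -/

import Mathlib

lemma haux_strictAnti : StrictAntiOn (fun x : ℝ => (1 - x) * Real.exp x) (Set.Ici 0) := by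
  apply strictAntiOn_of_deriv_neg (convex_Ici 0)
    (Continuous.continuousOn (by continuity))
  intro x hx
  rw [interior_Ici] at hx
  have hd : HasDerivAt (fun x : ℝ => (1 - x) * Real.exp x) (-x * Real.exp x) x := by
    have h1 : HasDerivAt (fun x : ℝ => 1 - x) (-1) x := by
      simpa using (hasDerivAt_id x).const_sub 1
    have := h1.mul (Real.hasDerivAt_exp x)
    rw [show -x * Real.exp x = -1 * Real.exp x + (1 - x) * Real.exp x by ring]
    exact this
  rw [hd.deriv]
  exact mul_neg_of_neg_of_pos (neg_neg_of_pos hx) (Real.exp_pos x)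

lemma pow_antitone_aux (τ : ℝ) (hτ : 0 < τ) :
    AntitoneOn (fun lam : ℝ => (2 * τ / lam) ^ ((1 : ℝ) / 3)) (Set.Ioi (0 : ℝ)) := by
  intro a ha b hb hab
  simp only [Set.mem_Ioi] at ha hb
  apply Real.rpow_le_rpow (by positivity)
  · exact div_le_div_of_nonneg_left (by positivity) ha hab
  · norm_num

/-- The candidate solutions
`α*_λ = max{(2τ1/λ)^{1/3}, α_min}`, `β*_λ = max{β_λ, β_min}`,
`γ*_λ = max{(2τ4/λ)^{1/3}, γ_min}` (with `β_λ` the unique positive zero of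
`g_λ`) and their sum `z_λ` are all monotonically non-increasing in `λ` on
`(0,∞)`. -/
theorem fast_candidates_antitone
    (τ1 τ2 τ3 τ4 αmin βmin γmin : ℝ)
    (h1 : 0 < τ1) (h2 : 0 < τ2) (h3 : 0 < τ3) (h4 : 0 < τ4)
    (hαmin : 0 < αmin) (hβmin : 0 < βmin) (hγmin : 0 < γmin)
    (βof : ℝ → ℝ)
    (hβof : ∀ lam : ℝ, 0 < lam → 0 < βof lam ∧
      τ2 * (2 : ℝ) ^ (τ3 / βof lam) * (1 - τ3 * Real.log 2 / βof lam) - τ2 + lam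
        = 0) :
    AntitoneOn (fun lam : ℝ => max ((2 * τ1 / lam) ^ ((1 : ℝ) / 3)) αmin)
      (Set.Ioi (0 : ℝ)) ∧
    AntitoneOn (fun lam : ℝ => max (βof lam) βmin) (Set.Ioi (0 : ℝ)) ∧
    AntitoneOn (fun lam : ℝ => max ((2 * τ4 / lam) ^ ((1 : ℝ) / 3)) γmin)
      (Set.Ioi (0 : ℝ)) ∧
    AntitoneOn (fun lam : ℝ =>
      max ((2 * τ1 / lam) ^ ((1 : ℝ) / 3)) αmin + max (βof lam) βmin +
        max ((2 * τ4 / lam) ^ ((1 : ℝ) / 3)) γmin) (Set.Ioi (0 : ℝ)) := by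
  set c : ℝ := τ3 * Real.log 2 with hc
  have hlog2 : 0 < Real.log 2 := Real.log_pos (by norm_num)
  have hcpos : 0 < c := mul_pos h3 hlog2
  -- rewrite g in terms of haux
  have hF : ∀ β : ℝ, 0 < β →
      τ2 * (2 : ℝ) ^ (τ3 / β) * (1 - τ3 * Real.log 2 / β)
        = τ2 * ((1 - c / β) * Real.exp (c / β)) := by
    intro β hβ
    rw [Real.rpow_def_of_pos (by norm_num : (0:ℝ) < 2)]
    have : Real.log 2 * (τ3 / β) = c / β := by rw [hc]; ring
    rw [this]
    have : τ3 * Real.log 2 / β = c / β := by rw [hc]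
    rw [this]
    ring
  -- F strictly mono on Ioi 0, where F β = τ2 * h(c/β) - τ2
  have hFmono : ∀ β1 β2 : ℝ, 0 < β1 → 0 < β2 → β1 < β2 →
      τ2 * (2 : ℝ) ^ (τ3 / β1) * (1 - τ3 * Real.log 2 / β1) - τ2
        < τ2 * (2 : ℝ) ^ (τ3 / β2) * (1 - τ3 * Real.log 2 / β2) - τ2 := by
    intro β1 β2 hβ1 hβ2 hlt
    rw [hF β1 hβ1, hF β2 hβ2]
    have hx2 : (0:ℝ) ≤ c / β2 := le_of_lt (by positivity)
    have hx1 : (0:ℝ) ≤ c / β1 := le_of_lt (by positivity)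
    have hxlt : c / β2 < c / β1 := div_lt_div_of_pos_left hcpos hβ1 hlt
    have := haux_strictAnti hx2 hx1 hxlt
    have h' := mul_lt_mul_of_pos_left this h2
    linarith
  -- βof is antitone
  have hβanti : AntitoneOn βof (Set.Ioi (0 : ℝ)) := by
    intro a ha b hb hab
    simp only [Set.mem_Ioi] at ha hb
    obtain ⟨hpa, hga⟩ := hβof a ha
    obtain ⟨hpb, hgb⟩ := hβof b hb
    by_contra hcon
    push_neg at hcon
    have := hFmono (βof a) (βof b) hpa hpb hcon
    have hFa : τ2 * (2 : ℝ) ^ (τ3 / βof a) * (1 - τ3 * Real.log 2 / βof a) - τ2 = -a := by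
      linarith
    have hFb : τ2 * (2 : ℝ) ^ (τ3 / βof b) * (1 - τ3 * Real.log 2 / βof b) - τ2 = -b := by
      linarith
    rw [hFa, hFb] at this
    linarith
  have hα := pow_antitone_aux τ1 h1
  have hγ := pow_antitone_aux τ4 h4
  have hA : AntitoneOn (fun lam : ℝ => max ((2 * τ1 / lam) ^ ((1 : ℝ) / 3)) αmin)
      (Set.Ioi (0 : ℝ)) := fun a ha b hb hab =>
    max_le_max (hα ha hb hab) le_rfl
  have hB : AntitoneOn (fun lam : ℝ => max (βof lam) βmin) (Set.Ioi (0 : ℝ)) :=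
    fun a ha b hb hab => max_le_max (hβanti ha hb hab) le_rfl
  have hG : AntitoneOn (fun lam : ℝ => max ((2 * τ4 / lam) ^ ((1 : ℝ) / 3)) γmin)
      (Set.Ioi (0 : ℝ)) := fun a ha b hb hab =>
    max_le_max (hγ ha hb hab) le_rfl
  exact ⟨hA, hB, hG, fun a ha b hb hab =>
    add_le_add (add_le_add (hA ha hb hab) (hB ha hb hab)) (hG ha hb hab)⟩
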